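/- The space S^14 consists exactly of the functions that can be computed by H-conforming bias-free ReLU neural networks with one hidden layer: every linear combination of the 14 functions g_M with |M| ≤ 2 is computed by such a network, and conversely every function computed by an H-conforming bias-free ReLU network with one hidden layer lies in S^14. -/

import Mathlib

open Finset

/-- Extend `x ∈ ℝ⁴` by the coordinate `x₀ = 0`, giving a vector indexed by `[4]₀ = {0,…,4}`. -/
noncomputable def ext (x : Fin 4 → ℝ) : Fin 5 → ℝ := Fin.cases 0 x

/-- The cell `C_π = {x ∈ ℝ⁴ : x_{π(0)} ≤ x_{π(1)} ≤ x_{π(2)} ≤ x_{π(3)} ≤ x_{π(4)}}` of the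
hyperplane arrangement `H` (with the convention `x₀ = 0`). -/
def cell (π : Equiv.Perm (Fin 5)) : Set (Fin 4 → ℝ) :=
  {x | ∀ i : Fin 4, ext x (π i.castSucc) ≤ ext x (π i.succ)}

/-- `g : ℝ⁴ → ℝ` is `H`-conforming: it is a positively homogeneous continuous function that
is linear on each cell `C_π` of the arrangement `H` (hence continuous piecewise linear). -/
def Hconforming (g : (Fin 4 → ℝ) → ℝ) : Prop :=
  Continuous g ∧ (∀ (lam : ℝ), 0 ≤ lam → ∀ x, g (lam • x) = lam * g x) ∧
    ∀ π : Equiv.Perm (Fin 5), ∃ a : Fin 4 → ℝ, ∀ x ∈ cell π, g x = ∑ j, a j * x j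

/-- The generator `r_S` of the ray `R_S`, for `∅ ⊊ S ⊊ [4]₀`: the 0/1 indicator vector of
the complement of `S` if `0 ∈ S`, and the 0/(−1) indicator vector of `S` if `0 ∉ S`. -/
noncomputable def ray (S : Finset (Fin 5)) : Fin 4 → ℝ := fun j =>
  if (0 : Fin 5) ∈ S then (if j.succ ∈ S then 0 else 1) else (if j.succ ∈ S then -1 else 0)

/-- `g_M(x) = max_{i ∈ M} x_i` (with the convention `x₀ = 0`; junk value `0` if `M = ∅`). -/
noncomputable def gM (M : Finset (Fin 5)) (x : Fin 4 → ℝ) : ℝ :=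
  if hM : M.Nonempty then M.sup' hM (ext x) else 0
@[simp] lemma ext_zero (x : Fin 4 → ℝ) : ext x 0 = 0 := rfl
@[simp] lemma ext_succ (x : Fin 4 → ℝ) (j : Fin 4) : ext x j.succ = x j := rfl
lemma ext_smul (l : ℝ) (x : Fin 4 → ℝ) (k : Fin 5) : ext (l • x) k = l * ext x k := by
  induction k using Fin.cases with
  | zero => simp
  | succ j => simp [_root_.ext]
lemma mem_cell_iff (π : Equiv.Perm (Fin 5)) (x : Fin 4 → ℝ) :
    x ∈ cell π ↔ Monotone (fun k => ext x (π k)) := by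
  rw [Fin.monotone_iff_le_succ]; rfl
noncomputable def row (c : ℝ) (i j : Fin 5) : Fin 4 → ℝ :=
  fun t => c * ((if t.succ = i then 1 else 0) - (if t.succ = j then 1 else 0))
lemma row_eval (c : ℝ) (i j : Fin 5) (x : Fin 4 → ℝ) :
    ∑ t, row c i j t * x t = c * (ext x i - ext x j) := by
  have h : ∀ i : Fin 5, ext x i = ∑ t, (if t.succ = i then (1:ℝ) else 0) * x t := by
    intro i
    induction i using Fin.cases with
    | zero => simp [Fin.succ_ne_zero]
    | succ j =>
      rw [Finset.sum_eq_single j]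
      · simp
      · intro b _ hb; simp [Fin.succ_inj, hb]
      · simp
  rw [h i, h j]; unfold row
  rw [← Finset.sum_sub_distrib, Finset.mul_sum]
  congr 1; ext t; ring

lemma continuous_ext_apply (k : Fin 5) : Continuous (fun x : Fin 4 → ℝ => ext x k) := by
  induction k using Fin.cases with
  | zero => simpa using continuous_const
  | succ j => simpa using continuous_apply j

lemma conf_row (c : ℝ) (i j : Fin 5) :
    Hconforming (fun x => max 0 (∑ t, row c i j t * x t)) := by
  have hrw : ∀ x : Fin 4 → ℝ, (∑ t, row c i j t * x t) = c * (ext x i - ext x j) :=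
    row_eval c i j
  refine ⟨?_, ?_, ?_⟩
  · apply Continuous.max continuous_const
    simp only [hrw]
    exact (continuous_const.mul ((continuous_ext_apply i).sub (continuous_ext_apply j)))
  · intro l hl x
    simp only [hrw, ext_smul]
    rw [show c * (l * ext x i - l * ext x j) = l * (c * (ext x i - ext x j)) by ring,
      mul_max_of_nonneg _ _ hl, mul_zero]
  · intro π
    have key : ∀ x ∈ cell π, ext x i ≤ ext x j ∨ ext x j ≤ ext x i := by
      intro x hx
      rw [mem_cell_iff] at hx
      rcases le_total (π.symm i) (π.symm j) with h | h
      · left; simpa using hx h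
      · right; simpa using hx h
    -- sign of c * (ext x i - ext x j) depends on order of π.symm i, π.symm j
    rcases le_total (π.symm i) (π.symm j) with h | h
    · -- ext x i ≤ ext x j on cell
      have hle : ∀ x ∈ cell π, ext x i ≤ ext x j := by
        intro x hx; rw [mem_cell_iff] at hx; simpa using hx h
      rcases le_total 0 c with hc | hc
      · exact ⟨0, fun x hx => by
          simp only [hrw]
          rw [max_eq_left (by nlinarith [hle x hx])]
          simp⟩
      · exact ⟨row c i j, fun x hx => by
          simp only [hrw, row_eval]
          rw [max_eq_right (by nlinarith [hle x hx])]⟩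
    · have hle : ∀ x ∈ cell π, ext x j ≤ ext x i := by
        intro x hx; rw [mem_cell_iff] at hx; simpa using hx h
      rcases le_total 0 c with hc | hc
      · exact ⟨row c i j, fun x hx => by
          simp only [hrw, row_eval]
          rw [max_eq_right (by nlinarith [hle x hx])]⟩
      · exact ⟨0, fun x hx => by
          simp only [hrw]
          rw [max_eq_left (by nlinarith [hle x hx])]
          simp⟩

lemma ext_add_smul (x y : Fin 4 → ℝ) (l : ℝ) (k : Fin 5) :
    ext (fun t => x t + l * y t) k = ext x k + l * ext y k := by
  induction k using Fin.cases with
  | zero => simp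
  | succ j => simp [_root_.ext]

lemma cell_cone {π : Equiv.Perm (Fin 5)} {x y : Fin 4 → ℝ} {l : ℝ}
    (hx : x ∈ cell π) (hy : y ∈ cell π) (hl : 0 ≤ l) :
    (fun t => x t + l * y t) ∈ cell π := by
  intro i
  have h1 := hx i; have h2 := hy i
  rw [ext_add_smul, ext_add_smul]
  have := mul_le_mul_of_nonneg_left h2 hl
  linarith

lemma no_mixed (a : Fin 4 → ℝ) (h : Hconforming (fun x => max 0 (∑ t, a t * x t)))
    (π : Equiv.Perm (Fin 5)) (x y : Fin 4 → ℝ) (hx : x ∈ cell π) (hy : y ∈ cell π)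
    (hxp : 0 < ∑ t, a t * x t) (hyn : ∑ t, a t * y t < 0) : False := by
  obtain ⟨b, hb⟩ := h.2.2 π
  set X := ∑ t, a t * x t with hX
  set Y := ∑ t, a t * y t with hY
  set l := (X + 1) / (-Y) with hl
  have hlpos : 0 ≤ l := by
    apply div_nonneg <;> linarith
  have hz : (fun t => x t + l * y t) ∈ cell π := cell_cone hx hy hlpos
  have hbx : max 0 X = ∑ j, b j * x j := hb x hx
  have hby : max 0 Y = ∑ j, b j * y j := hb y hy
  have hbz : max 0 (∑ t, a t * (x t + l * y t)) = ∑ j, b j * (x j + l * y j) := hb _ hz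
  have e1 : ∑ t, a t * (x t + l * y t) = X + l * Y := by
    rw [hX, hY, Finset.mul_sum, ← Finset.sum_add_distrib]
    congr 1; ext t; ring
  have e2 : ∑ t, b t * (x t + l * y t) = (∑ t, b t * x t) + l * ∑ t, b t * y t := by
    rw [Finset.mul_sum, ← Finset.sum_add_distrib]
    congr 1; ext t; ring
  have hYne : -Y ≠ 0 := by linarith
  have e3 : X + l * Y = -1 := by
    have h' : (X + 1) / -Y * Y = -(X + 1) := by
      rw [div_mul_eq_mul_div, div_eq_iff hYne]; ring
    rw [hl]; linarith
  rw [e1, e2, e3] at hbz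
  rw [max_eq_left (by norm_num : (-1:ℝ) ≤ 0)] at hbz
  rw [max_eq_right hxp.le] at hbx
  rw [max_eq_left hyn.le] at hby
  rw [← hbx, ← hby] at hbz
  nlinarith

lemma exists_perm_top2 (a b : Fin 5) (hab : a ≠ b) :
    ∃ π : Equiv.Perm (Fin 5), π 4 = a ∧ π 3 = b := by
  set τ := Equiv.swap (4 : Fin 5) a with hτ
  have hτ4 : τ 4 = a := Equiv.swap_apply_left _ _
  refine ⟨τ * Equiv.swap 3 (τ.symm b), ?_, ?_⟩
  · have h1 : τ.symm b ≠ 4 := by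
      intro hc
      apply hab
      rw [← hτ4, ← hc, Equiv.apply_symm_apply]
    simp only [Equiv.Perm.mul_apply]
    rw [Equiv.swap_apply_of_ne_of_ne (by decide) (Ne.symm h1)]
    exact hτ4
  · simp only [Equiv.Perm.mul_apply]
    rw [Equiv.swap_apply_left, Equiv.apply_symm_apply]

lemma exists_perm_botTop (a b : Fin 5) (hab : a ≠ b) :
    ∃ π : Equiv.Perm (Fin 5), π 0 = b ∧ π 4 = a := by
  set τ := Equiv.swap (0 : Fin 5) b with hτ
  have hτ0 : τ 0 = b := Equiv.swap_apply_left _ _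
  refine ⟨τ * Equiv.swap 4 (τ.symm a), ?_, ?_⟩
  · have h1 : τ.symm a ≠ 0 := by
      intro hc
      apply hab
      rw [← hτ0, ← hc, Equiv.apply_symm_apply]
    simp only [Equiv.Perm.mul_apply]
    rw [Equiv.swap_apply_of_ne_of_ne (by decide) (Ne.symm h1)]
    exact hτ0
  · simp only [Equiv.Perm.mul_apply]
    rw [Equiv.swap_apply_left, Equiv.apply_symm_apply]

noncomputable def pt (a : Fin 5) : Fin 4 → ℝ := fun j => if j.succ = a then 1 else 0
noncomputable def ptneg (a : Fin 5) : Fin 4 → ℝ := fun j => if j.succ = a then -1 else 0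
noncomputable def pt2 (a b : Fin 5) : Fin 4 → ℝ := fun j => if j.succ = a ∨ j.succ = b then 1 else 0

lemma ext_pt (a : Fin 5) (ha : a ≠ 0) (k : Fin 5) : ext (pt a) k = if k = a then 1 else 0 := by
  induction k using Fin.cases with
  | zero => simp [Ne.symm ha]
  | succ j => simp [pt]

lemma ext_ptneg (a : Fin 5) (ha : a ≠ 0) (k : Fin 5) :
    ext (ptneg a) k = if k = a then -1 else 0 := by
  induction k using Fin.cases with
  | zero => simp [Ne.symm ha]
  | succ j => simp [ptneg]

lemma ext_pt2 (a b : Fin 5) (ha : a ≠ 0) (hb : b ≠ 0) (k : Fin 5) :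
    ext (pt2 a b) k = if k = a ∨ k = b then 1 else 0 := by
  induction k using Fin.cases with
  | zero => simp [Ne.symm ha, Ne.symm hb]
  | succ j => simp [pt2]

lemma castSucc_ne_four (i : Fin 4) : (i.castSucc : Fin 5) ≠ 4 := by
  simp [Fin.ext_iff]; omega

lemma succ_ne_zero' (i : Fin 4) : (i.succ : Fin 5) ≠ 0 := Fin.succ_ne_zero i

lemma mem_pt_top {π : Equiv.Perm (Fin 5)} {a : Fin 5} (ha : a ≠ 0) (h4 : π 4 = a) :
    pt a ∈ cell π := by
  intro i
  rw [ext_pt a ha, ext_pt a ha]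
  have h1 : π i.castSucc ≠ a := by
    intro hc
    exact castSucc_ne_four i (π.injective (hc.trans h4.symm))
  rw [if_neg h1]
  split_ifs <;> norm_num

lemma mem_ptneg_bot {π : Equiv.Perm (Fin 5)} {a : Fin 5} (ha : a ≠ 0) (h0 : π 0 = a) :
    ptneg a ∈ cell π := by
  intro i
  rw [ext_ptneg a ha, ext_ptneg a ha]
  have h1 : π i.succ ≠ a := by
    intro hc
    exact succ_ne_zero' i (π.injective (hc.trans h0.symm))
  rw [if_neg h1]
  split_ifs <;> norm_num

lemma mem_pt2_top {π : Equiv.Perm (Fin 5)} {a b : Fin 5} (ha : a ≠ 0) (hb : b ≠ 0)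
    (h4 : π 4 = a) (h3 : π 3 = b) : pt2 a b ∈ cell π := by
  intro i
  rw [ext_pt2 a b ha hb, ext_pt2 a b ha hb]
  split_ifs with h1 h2
  · norm_num
  · exfalso
    rcases h1 with h1 | h1
    · exact castSucc_ne_four i (π.injective (h1.trans h4.symm))
    · have hi : i.castSucc = 3 := π.injective (h1.trans h3.symm)
      have hisucc : i.succ = (4 : Fin 5) := by
        rw [Fin.ext_iff] at hi ⊢
        simp only [Fin.coe_castSucc, Fin.val_succ] at hi ⊢
        have e3 : ((3 : Fin 5) : ℕ) = 3 := rfl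
        have e4 : ((4 : Fin 5) : ℕ) = 4 := rfl
        rw [e3] at hi; rw [e4]; omega
      exact h2 (Or.inl (by rw [hisucc, h4]))
  · norm_num
  · norm_num

lemma sum_pt (w : Fin 4 → ℝ) (s : Fin 4) : ∑ t, w t * pt s.succ t = w s := by
  rw [Finset.sum_eq_single s]
  · simp [pt]
  · intro b _ hb; simp [pt, Fin.succ_inj, hb]
  · simp

lemma sum_ptneg (w : Fin 4 → ℝ) (s : Fin 4) : ∑ t, w t * ptneg s.succ t = -w s := by
  rw [Finset.sum_eq_single s]
  · simp [ptneg]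
  · intro b _ hb; simp [ptneg, Fin.succ_inj, hb]
  · simp

lemma sum_pt2 (w : Fin 4 → ℝ) (s t : Fin 4) (hst : s ≠ t) :
    ∑ u, w u * pt2 s.succ t.succ u = w s + w t := by
  have : ∀ u : Fin 4, w u * pt2 s.succ t.succ u
      = (if u = s then w u else 0) + (if u = t then w u else 0) := by
    intro u
    simp only [pt2, Fin.succ_inj]
    by_cases h1 : u = s <;> by_cases h2 : u = t <;> simp_all
  rw [Finset.sum_congr rfl (fun u _ => this u), Finset.sum_add_distrib]
  simp [Finset.sum_ite_eq']

section signs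
variable {a : Fin 4 → ℝ} (h : Hconforming (fun x => max 0 (∑ t, a t * x t)))

include h in
lemma factA {s t : Fin 4} (hst : s ≠ t) (hs : 0 < a s) (ht : 0 < a t) : False := by
  obtain ⟨π, hπ0, hπ4⟩ := exists_perm_botTop s.succ t.succ (by simp [Fin.succ_inj, hst])
  exact no_mixed a h π (pt s.succ) (ptneg t.succ)
    (mem_pt_top (succ_ne_zero' s) hπ4) (mem_ptneg_bot (succ_ne_zero' t) hπ0)
    (by rw [sum_pt]; exact hs) (by rw [sum_ptneg]; linarith)

include h in
lemma factA' {s t : Fin 4} (hst : s ≠ t) (hs : a s < 0) (ht : a t < 0) : False := by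
  obtain ⟨π, hπ0, hπ4⟩ := exists_perm_botTop s.succ t.succ (by simp [Fin.succ_inj, hst])
  exact no_mixed a h π (ptneg t.succ) (pt s.succ)
    (mem_ptneg_bot (succ_ne_zero' t) hπ0) (mem_pt_top (succ_ne_zero' s) hπ4)
    (by rw [sum_ptneg]; linarith) (by rw [sum_pt]; exact hs)

include h in
lemma factB {s t : Fin 4} (hst : s ≠ t) (hs : 0 < a s) (hsum : a s + a t < 0) : False := by
  obtain ⟨π, hπ4, hπ3⟩ := exists_perm_top2 s.succ t.succ (by simp [Fin.succ_inj, hst])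
  exact no_mixed a h π (pt s.succ) (pt2 s.succ t.succ)
    (mem_pt_top (succ_ne_zero' s) hπ4)
    (mem_pt2_top (succ_ne_zero' s) (succ_ne_zero' t) hπ4 hπ3)
    (by rw [sum_pt]; exact hs) (by rw [sum_pt2 a s t hst]; exact hsum)

include h in
lemma factB' {s t : Fin 4} (hst : s ≠ t) (hs : a s < 0) (hsum : 0 < a s + a t) : False := by
  obtain ⟨π, hπ4, hπ3⟩ := exists_perm_top2 s.succ t.succ (by simp [Fin.succ_inj, hst])
  exact no_mixed a h π (pt2 s.succ t.succ) (pt s.succ)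
    (mem_pt2_top (succ_ne_zero' s) (succ_ne_zero' t) hπ4 hπ3)
    (mem_pt_top (succ_ne_zero' s) hπ4)
    (by rw [sum_pt2 a s t hst]; exact hsum) (by rw [sum_pt]; exact hs)

include h in
lemma classify :
    ∃ (c : ℝ) (i j : Fin 5), i ≠ j ∧ i ≠ 0 ∧
      ∀ x, ∑ t, a t * x t = c * (ext x i - ext x j) := by
  by_cases h0 : ∀ u, a u = 0
  · exact ⟨0, 1, 0, by decide, by decide, fun x => by simp [h0]⟩
  push_neg at h0
  obtain ⟨s, hs⟩ := h0
  by_cases h1 : ∀ u, u ≠ s → a u = 0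
  · refine ⟨a s, s.succ, 0, succ_ne_zero' s, succ_ne_zero' s, fun x => ?_⟩
    rw [Finset.sum_eq_single s]
    · simp
    · intro b _ hb; simp [h1 b hb]
    · simp
  push_neg at h1
  obtain ⟨t, hts, ht⟩ := h1
  have hst : s ≠ t := fun hc => hts (hc.symm)
  -- a s and a t have opposite signs
  have hsign : (0 < a s ∧ a t < 0) ∨ (a s < 0 ∧ 0 < a t) := by
    rcases lt_trichotomy (a s) 0 with h2 | h2 | h2
    · rcases lt_trichotomy (a t) 0 with h3 | h3 | h3
      · exact absurd (factA' h hst h2 h3) id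
      · exact absurd h3 ht
      · exact Or.inr ⟨h2, h3⟩
    · exact absurd h2 hs
    · rcases lt_trichotomy (a t) 0 with h3 | h3 | h3
      · exact Or.inl ⟨h2, h3⟩
      · exact absurd h3 ht
      · exact absurd (factA h hst h2 h3) id
  have key : ∀ p q : Fin 4, p ≠ q → 0 < a p → a q < 0 →
      (a p + a q = 0 ∧ ∀ u, u ≠ p → u ≠ q → a u = 0) := by
    intro p q hpq hp hq
    constructor
    · by_contra hne
      rcases lt_or_gt_of_ne hne with h2 | h2
      · exact factB h hpq hp h2
      · exact factB' h hpq.symm hq (by linarith)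
    · intro u hup huq
      by_contra hu
      rcases lt_trichotomy (a u) 0 with h2 | h2 | h2
      · exact factA' h (fun hc => huq hc.symm) hq h2
      · exact hu h2
      · exact factA h (fun hc => hup hc.symm) hp h2
  have sum2 : ∀ (p q : Fin 4), p ≠ q → (∀ u, u ≠ p → u ≠ q → a u = 0) →
      ∀ x : Fin 4 → ℝ, ∑ u, a u * x u = a p * x p + a q * x q := by
    intro p q hpq hz x
    rw [← Finset.sum_subset (Finset.subset_univ {p, q})
      (fun u _ hu => by
        simp only [Finset.mem_insert, Finset.mem_singleton, not_or] at hu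
        rw [hz u hu.1 hu.2, zero_mul])]
    rw [Finset.sum_pair hpq]
  rcases hsign with ⟨h2, h3⟩ | ⟨h2, h3⟩
  · obtain ⟨hsum0, hz⟩ := key s t hst h2 h3
    refine ⟨a s, s.succ, t.succ, by simp [Fin.succ_inj, hst], succ_ne_zero' s, fun x => ?_⟩
    rw [sum2 s t hst hz x]
    simp only [ext_succ]
    have : a t = -a s := by linarith
    rw [this]; ring
  · obtain ⟨hsum0, hz⟩ := key t s hst.symm h3 h2
    refine ⟨a t, t.succ, s.succ, by simp [Fin.succ_inj, hst.symm], succ_ne_zero' t, fun x => ?_⟩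
    rw [sum2 s t hst (fun u h1 h2 => hz u h2 h1) x]
    simp only [ext_succ]
    have : a s = -a t := by linarith
    rw [this]; ring

end signs

def InS (f : (Fin 4 → ℝ) → ℝ) : Prop :=
  ∃ c : Finset (Fin 5) → ℝ,
    (∀ M, ¬(M.Nonempty ∧ M ≠ {0} ∧ M.card ≤ 2) → c M = 0) ∧
    ∀ x, f x = ∑ M : Finset (Fin 5), c M * gM M x

lemma gM_single (i : Fin 5) (x : Fin 4 → ℝ) : gM {i} x = ext x i := by
  rw [gM, dif_pos (Finset.singleton_nonempty i), Finset.sup'_singleton]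

lemma gM_pair {i j : Fin 5} (hij : i ≠ j) (x : Fin 4 → ℝ) :
    gM {i, j} x = max (ext x i) (ext x j) := by
  rw [gM, dif_pos ⟨i, Finset.mem_insert_self i {j}⟩]
  rw [Finset.sup'_insert (H := Finset.singleton_nonempty j), Finset.sup'_singleton]

lemma max_formula (c u v : ℝ) :
    max 0 (c * (u - v)) = |c| * max u v - max c 0 * v - max (-c) 0 * u := by
  rcases le_total 0 c with hc | hc <;> rcases le_total u v with huv | huv
  · rw [abs_of_nonneg hc, max_eq_left hc, max_eq_right (by linarith : -c ≤ 0),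
      max_eq_right huv, max_eq_left (by nlinarith : c * (u - v) ≤ 0)]
    ring
  · rw [abs_of_nonneg hc, max_eq_left hc, max_eq_right (by linarith : -c ≤ 0),
      max_eq_left huv, max_eq_right (by nlinarith : (0:ℝ) ≤ c * (u - v))]
    ring
  · rw [abs_of_nonpos hc, max_eq_right hc, max_eq_left (by linarith : (0:ℝ) ≤ -c),
      max_eq_right huv, max_eq_right (by nlinarith : (0:ℝ) ≤ c * (u - v))]
    ring
  · rw [abs_of_nonpos hc, max_eq_right hc, max_eq_left (by linarith : (0:ℝ) ≤ -c),
      max_eq_left huv, max_eq_left (by nlinarith : c * (u - v) ≤ 0)]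
    ring

lemma pair_ne_zero_singleton {i j : Fin 5} (hi : i ≠ 0) :
    ({i, j} : Finset (Fin 5)) ≠ {0} := by
  intro hc
  have : i ∈ ({0} : Finset (Fin 5)) := hc ▸ Finset.mem_insert_self i {j}
  exact hi (Finset.mem_singleton.mp this)

lemma InS_relu (c : ℝ) (i j : Fin 5) (hij : i ≠ j) (hi : i ≠ 0) :
    InS (fun x => max 0 (c * (ext x i - ext x j))) := by
  classical
  refine ⟨fun M => (if M = {i, j} then |c| else 0)
      - (if M = {j} then (if j = 0 then 0 else max c 0) else 0)
      - (if M = {i} then max (-c) 0 else 0), ?_, ?_⟩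
  · intro M hM
    by_cases h1 : M = {i, j}
    · exact absurd ⟨h1 ▸ ⟨i, Finset.mem_insert_self i {j}⟩,
        h1 ▸ pair_ne_zero_singleton hi,
        h1 ▸ le_trans (Finset.card_insert_le i {j}) (by simp)⟩ hM
    by_cases h2 : M = {i}
    · exact absurd ⟨h2 ▸ Finset.singleton_nonempty i,
        h2 ▸ (by simpa using hi), h2 ▸ (by simp)⟩ hM
    by_cases h3 : M = {j}
    · by_cases hj : j = 0
      · subst h3; subst hj
        simp [h1, Ne.symm hi]
      · exact absurd ⟨h3 ▸ Finset.singleton_nonempty j,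
          h3 ▸ (by simpa using hj), h3 ▸ (by simp)⟩ hM
    · simp [h1, h2, h3]
  · intro x
    have expand : ∀ M : Finset (Fin 5),
        ((if M = {i, j} then |c| else 0)
          - (if M = {j} then (if j = 0 then 0 else max c 0) else 0)
          - (if M = {i} then max (-c) 0 else 0)) * gM M x
        = (if M = {i, j} then |c| * gM M x else 0)
          - (if M = {j} then (if j = 0 then 0 else max c 0) * gM M x else 0)
          - (if M = {i} then max (-c) 0 * gM M x else 0) := by
      intro M; split_ifs <;> ring
    rw [Finset.sum_congr rfl (fun M _ => expand M), Finset.sum_sub_distrib,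
      Finset.sum_sub_distrib, Finset.sum_ite_eq', Finset.sum_ite_eq', Finset.sum_ite_eq']
    simp only [Finset.mem_univ, if_true]
    rw [gM_pair hij, gM_single, gM_single]
    by_cases hj : j = 0
    · rw [if_pos hj, hj, ext_zero]
      have := max_formula c (ext x i) 0
      rw [this]; ring
    · rw [if_neg hj]
      exact max_formula c (ext x i) (ext x j)

lemma InS_congr {f g : (Fin 4 → ℝ) → ℝ} (h : ∀ x, f x = g x) (hg : InS g) : InS f := by
  obtain ⟨c, hc, he⟩ := hg
  exact ⟨c, hc, fun x => (h x).trans (he x)⟩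

lemma InS_zero : InS (fun _ => 0) := ⟨0, fun _ _ => rfl, by simp⟩

lemma InS_smul (r : ℝ) {f : (Fin 4 → ℝ) → ℝ} (hf : InS f) : InS (fun x => r * f x) := by
  obtain ⟨c, hc, he⟩ := hf
  refine ⟨fun M => r * c M, fun M hM => by dsimp only; rw [hc M hM, mul_zero], fun x => ?_⟩
  dsimp only
  rw [he x, Finset.mul_sum]
  congr 1; ext M; ring

lemma InS_add {f g : (Fin 4 → ℝ) → ℝ} (hf : InS f) (hg : InS g) :
    InS (fun x => f x + g x) := by
  obtain ⟨c, hc, he⟩ := hf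
  obtain ⟨d, hd, he'⟩ := hg
  refine ⟨fun M => c M + d M, fun M hM => by dsimp only; rw [hc M hM, hd M hM, add_zero],
    fun x => ?_⟩
  dsimp only
  rw [he x, he' x, ← Finset.sum_add_distrib]
  congr 1; ext M; ring

lemma InS_sum {ι : Type*} (s : Finset ι) (F : ι → (Fin 4 → ℝ) → ℝ)
    (h : ∀ i ∈ s, InS (F i)) : InS (fun x => ∑ i ∈ s, F i x) := by
  classical
  induction s using Finset.cons_induction with
  | empty => simpa using InS_zero
  | cons a s ha ih =>
    have := InS_add (h a (Finset.mem_cons_self a s))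
      (ih (fun i hi => h i (Finset.mem_cons_of_mem hi)))
    exact InS_congr (fun x => by rw [Finset.sum_cons]) this

def RepN (f : (Fin 4 → ℝ) → ℝ) : Prop :=
  ∃ (m : ℕ) (A : Fin m → Fin 4 → ℝ) (c : Fin m → ℝ),
    (∀ i, Hconforming (fun x => max 0 (∑ t, A i t * x t))) ∧
    ∀ x, f x = ∑ i, c i * max 0 (∑ t, A i t * x t)

lemma Rep_congr {f g : (Fin 4 → ℝ) → ℝ} (h : ∀ x, f x = g x) (hg : RepN g) : RepN f := by
  obtain ⟨m, A, c, hA, he⟩ := hg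
  exact ⟨m, A, c, hA, fun x => (h x).trans (he x)⟩

lemma Rep_zero : RepN (fun _ => 0) :=
  ⟨0, fun i => i.elim0, fun i => i.elim0, fun i => i.elim0, by simp⟩

lemma Rep_smul (r : ℝ) {f : (Fin 4 → ℝ) → ℝ} (hf : RepN f) : RepN (fun x => r * f x) := by
  obtain ⟨m, A, c, hA, he⟩ := hf
  refine ⟨m, A, fun i => r * c i, hA, fun x => ?_⟩
  dsimp only
  rw [he x, Finset.mul_sum]
  congr 1; ext i; ring

lemma Rep_add {f g : (Fin 4 → ℝ) → ℝ} (hf : RepN f) (hg : RepN g) :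
    RepN (fun x => f x + g x) := by
  obtain ⟨m, A, c, hA, he⟩ := hf
  obtain ⟨n, B, d, hB, he'⟩ := hg
  refine ⟨m + n, Fin.append A B, Fin.append c d, ?_, fun x => ?_⟩
  · intro i
    refine Fin.addCases (motive := fun i =>
      Hconforming (fun x => max 0 (∑ t, Fin.append A B i t * x t))) ?_ ?_ i
    · intro i; simpa only [Fin.append_left] using hA i
    · intro i; simpa only [Fin.append_right] using hB i
  · dsimp only
    rw [he x, he' x, Fin.sum_univ_add]
    simp only [Fin.append_left, Fin.append_right]

lemma Rep_sum {ι : Type*} (s : Finset ι) (F : ι → (Fin 4 → ℝ) → ℝ)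
    (h : ∀ i ∈ s, RepN (F i)) : RepN (fun x => ∑ i ∈ s, F i x) := by
  classical
  induction s using Finset.cons_induction with
  | empty => simpa using Rep_zero
  | cons a s ha ih =>
    have := Rep_add (h a (Finset.mem_cons_self a s))
      (ih (fun i hi => h i (Finset.mem_cons_of_mem hi)))
    exact Rep_congr (fun x => by rw [Finset.sum_cons]) this

lemma relu_sub_relu (u : ℝ) : max 0 u - max 0 (-u) = u := by
  rcases le_total 0 u with h | h
  · rw [max_eq_right h, max_eq_left (by linarith : -u ≤ 0)]; ring
  · rw [max_eq_left h, max_eq_right (by linarith : (0:ℝ) ≤ -u)]; ring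

lemma max_decomp (u v : ℝ) : max u v = max 0 (u - v) + max 0 v - max 0 (-v) := by
  have h1 : max u v = v + max 0 (u - v) := by
    rcases le_total u v with h | h
    · rw [max_eq_right h, max_eq_left (by linarith : u - v ≤ 0)]; ring
    · rw [max_eq_left h, max_eq_right (by linarith : (0:ℝ) ≤ u - v)]; ring
  have h2 := relu_sub_relu v
  linarith

lemma Rep_ext (i : Fin 5) : RepN (fun x => ext x i) := by
  refine ⟨2, ![row 1 i 0, row (-1) i 0], ![1, -1], ?_, fun x => ?_⟩
  · intro k
    fin_cases k
    · simpa using conf_row 1 i 0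
    · simpa using conf_row (-1) i 0
  · rw [Fin.sum_univ_two]
    simp only [Matrix.cons_val_zero, Matrix.cons_val_one, Matrix.head_cons, row_eval,
      ext_zero, sub_zero, one_mul, neg_one_mul]
    have := relu_sub_relu (ext x i)
    linarith

lemma Rep_max (i j : Fin 5) : RepN (fun x => max (ext x i) (ext x j)) := by
  refine ⟨3, ![row 1 i j, row 1 j 0, row (-1) j 0], ![1, 1, -1], ?_, fun x => ?_⟩
  · intro k
    fin_cases k
    · simpa using conf_row 1 i j
    · simpa using conf_row 1 j 0
    · simpa using conf_row (-1) j 0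
  · rw [Fin.sum_univ_three]
    simp only [Matrix.cons_val_zero, Matrix.cons_val_one, Matrix.head_cons,
      Matrix.cons_val_two, Matrix.tail_cons, row_eval, ext_zero, sub_zero, one_mul,
      neg_one_mul]
    have := max_decomp (ext x i) (ext x j)
    linarith [this]

lemma Rep_gM (M : Finset (Fin 5)) (h1 : M.Nonempty) (h2 : M.card ≤ 2) : RepN (gM M) := by
  have hc : M.card = 1 ∨ M.card = 2 := by
    have := Finset.card_pos.mpr h1; omega
  rcases hc with hc | hc
  · obtain ⟨i, rfl⟩ := Finset.card_eq_one.mp hc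
    exact Rep_congr (fun x => gM_single i x) (Rep_ext i)
  · obtain ⟨i, j, hij, rfl⟩ := Finset.card_eq_two.mp hc
    exact Rep_congr (fun x => gM_pair hij x) (Rep_max i j)

/-- `S¹⁴` (the span of the 14 functions `g_M` with `M ∉ {∅,{0}}` and
`|M| ≤ 2`) consists exactly of the functions computed by `H`-conforming bias-free ReLU
neural networks with one hidden layer. -/
theorem s14_eq_conforming_two_layer (f : (Fin 4 → ℝ) → ℝ) :
    (∃ c : Finset (Fin 5) → ℝ,
        (∀ M, ¬(M.Nonempty ∧ M ≠ {0} ∧ M.card ≤ 2) → c M = 0) ∧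
        ∀ x, f x = ∑ M : Finset (Fin 5), c M * gM M x) ↔
      (∃ (m : ℕ) (A : Fin m → Fin 4 → ℝ) (c : Fin m → ℝ),
        (∀ i, Hconforming (fun x => max 0 (∑ t, A i t * x t))) ∧
        ∀ x, f x = ∑ i, c i * max 0 (∑ t, A i t * x t)) := by
  constructor
  · rintro ⟨c, hc, hf⟩
    have : RepN f := by
      refine Rep_congr hf (Rep_sum Finset.univ (fun M x => c M * gM M x) ?_)
      intro M _
      by_cases hM : M.Nonempty ∧ M ≠ {0} ∧ M.card ≤ 2
      · exact Rep_smul (c M) (Rep_gM M hM.1 hM.2.2)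
      · exact Rep_congr (fun x => by rw [hc M hM, zero_mul]) Rep_zero
    exact this
  · rintro ⟨m, A, c, hA, hf⟩
    have : InS f := by
      refine InS_congr hf (InS_sum Finset.univ
        (fun i x => c i * max 0 (∑ t, A i t * x t)) ?_)
      intro i _
      obtain ⟨d, p, q, hpq, hp, hrep⟩ := classify (hA i)
      exact InS_smul (c i) (InS_congr (fun x => by rw [← hrep x]) (InS_relu d p q hpq hp))
    exact this
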